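/- Let n, k ∈ ℕ with 1 ≤ k < n−1 and let m : [n] → ℕ be nonincreasing (m_1 ≥ m_2 ≥ … ≥ m_n) with k ∣ m_i for every i. Call p : [n] → ℕ feasible if for every E ⊆ [n] with |E| = n−k one has Σ_{i∈E} m_i ≤ Σ_{j∉E} min( p_j , Σ_{i∈E} m_i/k ). Then the least value of Σ_{j=1}^n p_j over feasible p equals R_sma = ( (n−1)·Σ_{i=1}^{n−k} m_i + (n−k)·m_{n−k+1} ) / k, and this least value is attained by exactly one feasible p, namely p_j = ( Σ_{i=1}^{n−k+1} m_i − m_j ) / k for 1 ≤ j ≤ n−k and p_j = ( Σ_{i=1}^{n−k} m_i ) / k for n−k < j ≤ n. -/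

import Mathlib

open Finset

lemma strictMono_fin_le {c n : ℕ} {f : Fin c → Fin n} (hf : StrictMono f) (i : Fin c) :
    (i : ℕ) ≤ (f i : ℕ) := by
  induction' hi : (i : ℕ) with v ih generalizing i
  · exact Nat.zero_le _
  · have hv : v < c := by omega
    have h1 : v ≤ (f ⟨v, hv⟩ : ℕ) := ih ⟨v, hv⟩ rfl
    have h2 : f ⟨v, hv⟩ < f i := hf (by rw [Fin.lt_def]; simp only [Fin.val_mk]; omega)
    rw [Fin.lt_def] at h2
    omega

lemma filterlt_map {n : ℕ} (c : ℕ) (h : c ≤ n) :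
    (Finset.univ.filter (fun i : Fin n => (i : ℕ) < c)) =
      Finset.map (Fin.castLEOrderEmb h).toEmbedding Finset.univ := by
  ext x
  simp only [mem_filter, mem_univ, true_and, Finset.mem_map, RelEmbedding.coe_toEmbedding]
  constructor
  · intro hx
    refine ⟨⟨x, hx⟩, ?_⟩
    rfl
  · rintro ⟨y, -, rfl⟩
    exact y.isLt

lemma filterlt_card {n : ℕ} (c : ℕ) (h : c ≤ n) :
    (Finset.univ.filter (fun i : Fin n => (i : ℕ) < c)).card = c := by
  rw [filterlt_map c h]; simp

lemma topsum {n : ℕ} (m : Fin n → ℕ) (hmono : ∀ i j : Fin n, i ≤ j → m j ≤ m i)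
    (E : Finset (Fin n)) :
    ∑ i ∈ E, m i ≤ ∑ i ∈ Finset.univ.filter (fun i : Fin n => (i : ℕ) < E.card), m i := by
  have hcn : E.card ≤ n := by
    simpa using Finset.card_le_univ E
  have hE : E = Finset.map (E.orderEmbOfFin rfl).toEmbedding Finset.univ := by
    ext x
    simp only [Finset.mem_map, RelEmbedding.coe_toEmbedding, mem_univ, true_and]
    constructor
    · intro hx
      have : x ∈ Set.range (E.orderEmbOfFin rfl) := by
        rw [Finset.range_orderEmbOfFin]; exact hx
      exact this
    · rintro ⟨y, rfl⟩
      exact Finset.orderEmbOfFin_mem E rfl y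
  rw [filterlt_map E.card hcn]
  conv_lhs => rw [hE]
  rw [Finset.sum_map, Finset.sum_map]
  apply Finset.sum_le_sum
  intro i _
  apply hmono
  show (Fin.castLEOrderEmb hcn) i ≤ _
  rw [Fin.le_def]
  exact strictMono_fin_le (E.orderEmbOfFin rfl).strictMono i

open Finset

theorem stmt6_aux (n k : ℕ) (hk1 : 1 ≤ k) (hk2 : k < n - 1)
    (m : Fin n → ℕ) (hmono : ∀ i j : Fin n, i ≤ j → m j ≤ m i)
    (hdvd : ∀ i, k ∣ m i) (hnk : n - k < n) :
    IsLeast {R : ℕ | ∃ p : Fin n → ℕ,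
        (∀ E : Finset (Fin n), E.card = n - k →
          ∑ i ∈ E, m i ≤ ∑ j ∈ Eᶜ, min (p j) (∑ i ∈ E, m i / k)) ∧ R = ∑ j, p j}
      (((n - 1) * ∑ i ∈ Finset.univ.filter (fun i : Fin n => (i : ℕ) < n - k), m i
        + (n - k) * m ⟨n - k, hnk⟩) / k) ∧
      ∀ p : Fin n → ℕ,
        (∀ E : Finset (Fin n), E.card = n - k →
          ∑ i ∈ E, m i ≤ ∑ j ∈ Eᶜ, min (p j) (∑ i ∈ E, m i / k)) →
        ∑ j, p j = ((n - 1) * ∑ i ∈ Finset.univ.filter (fun i : Fin n => (i : ℕ) < n - k), m i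
            + (n - k) * m ⟨n - k, hnk⟩) / k →
        p = fun j : Fin n =>
          if (j : ℕ) < n - k then
            ((∑ i ∈ Finset.univ.filter (fun i : Fin n => (i : ℕ) < n - k + 1), m i) - m j) / k
          else
            (∑ i ∈ Finset.univ.filter (fun i : Fin n => (i : ℕ) < n - k), m i) / k := by
  have hk0 : 0 < k := hk1
  set s := n - k with hs
  have hs2 : 2 ≤ s := by omega
  have hsn : s ≤ n := by omega
  have hs1n : s + 1 ≤ n := by omega
  set A : Finset (Fin n) := Finset.univ.filter (fun i : Fin n => (i : ℕ) < s) with hA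
  set A' : Finset (Fin n) := Finset.univ.filter (fun i : Fin n => (i : ℕ) < s + 1) with hA'
  set M : ℕ := ∑ i ∈ A, m i with hM
  set M' : ℕ := ∑ i ∈ A', m i with hM'
  set σ : Fin n := ⟨s, hnk⟩ with hσ
  have hAcard : A.card = s := filterlt_card s hsn
  have hA'card : A'.card = s + 1 := filterlt_card (s + 1) hs1n
  -- M' = M + m σ
  have hA'insert : A' = insert σ A := by
    ext x
    simp only [hA, hA', Finset.mem_insert, mem_filter, mem_univ, true_and]
    constructor
    · intro hx
      rcases Nat.lt_or_ge (x : ℕ) s with h | h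
      · exact Or.inr h
      · left; apply Fin.ext; simp [hσ]; omega
    · rintro (rfl | hx)
      · simp [hσ]
      · omega
  have hσA : σ ∉ A := by simp [hA, hσ]
  have hMM' : M' = m σ + M := by rw [hM', hA'insert, Finset.sum_insert hσA]
  have hdvdM : k ∣ M := Finset.dvd_sum fun i _ => hdvd i
  have hdvdM' : k ∣ M' := Finset.dvd_sum fun i _ => hdvd i
  have hmjM' : ∀ j : Fin n, (j : ℕ) < s + 1 → m j ≤ M' := by
    intro j hj
    exact Finset.single_le_sum (fun i _ => Nat.zero_le (m i)) (by simp [hA']; omega)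
  -- P = pstar
  set P : Fin n → ℕ := fun j : Fin n =>
    if (j : ℕ) < s then (M' - m j) / k else M / k with hP
  have hPk : ∀ j : Fin n, k * P j = if (j : ℕ) < s then M' - m j else M := by
    intro j
    rw [hP]
    by_cases hj : (j : ℕ) < s
    · simp only [hj, if_true]
      exact Nat.mul_div_cancel' (Nat.dvd_sub hdvdM' (hdvd j))
    · simp only [hj, if_false]
      exact Nat.mul_div_cancel' hdvdM
  -- q fact: for any E, k * (∑ i ∈ E, m i / k) = ∑ i ∈ E, m i
  have hq : ∀ E : Finset (Fin n), k * (∑ i ∈ E, m i / k) = ∑ i ∈ E, m i := by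
    intro E
    rw [Finset.mul_sum]
    exact Finset.sum_congr rfl fun i _ => Nat.mul_div_cancel' (hdvd i)
  have hcompl : ∀ E : Finset (Fin n), E.card = s → Eᶜ.card = k := by
    intro E hE
    rw [Finset.card_compl, hE, Fintype.card_fin]
    omega
  -- extraction: feasible p, E card s, j ∉ E → ∑_E m ≤ k * p j
  have extract : ∀ (p : Fin n → ℕ),
      (∀ E : Finset (Fin n), E.card = s →
        ∑ i ∈ E, m i ≤ ∑ j ∈ Eᶜ, min (p j) (∑ i ∈ E, m i / k)) →
      ∀ E : Finset (Fin n), E.card = s → ∀ j, j ∉ E → ∑ i ∈ E, m i ≤ k * p j := by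
    intro p hp E hE j hj
    set q : ℕ := ∑ i ∈ E, m i / k with hqdef
    have hkq : k * q = ∑ i ∈ E, m i := hq E
    have hjc : j ∈ Eᶜ := Finset.mem_compl.mpr hj
    have h1 : ∑ i ∈ E, m i ≤ ∑ x ∈ Eᶜ, min (p x) q := hp E hE
    have h2 : ∑ x ∈ Eᶜ, min (p x) q = min (p j) q + ∑ x ∈ Eᶜ.erase j, min (p x) q :=
      (Finset.add_sum_erase _ _ hjc).symm
    have h3 : ∑ x ∈ Eᶜ.erase j, min (p x) q ≤ (k - 1) * q := by
      calc ∑ x ∈ Eᶜ.erase j, min (p x) q ≤ ∑ _x ∈ Eᶜ.erase j, q :=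
            Finset.sum_le_sum fun x _ => min_le_right _ _
        _ = (Eᶜ.erase j).card * q := by rw [Finset.sum_const, smul_eq_mul]
        _ = (k - 1) * q := by rw [Finset.card_erase_of_mem hjc, hcompl E hE]
    have h4 : k * q ≤ min (p j) q + (k - 1) * q := by
      calc k * q = ∑ i ∈ E, m i := hkq
        _ ≤ ∑ x ∈ Eᶜ, min (p x) q := h1
        _ = min (p j) q + ∑ x ∈ Eᶜ.erase j, min (p x) q := h2
        _ ≤ min (p j) q + (k - 1) * q := Nat.add_le_add_left h3 _
    have h5 : q ≤ p j := by
      have hsplit : k * q = q + (k - 1) * q := by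
        obtain ⟨t, rfl⟩ : ∃ t, k = t + 1 := ⟨k - 1, by omega⟩
        simp only [Nat.add_sub_cancel]
        ring
      have h6 : q ≤ min (p j) q := by omega
      exact le_trans h6 (min_le_left _ _)
    calc ∑ i ∈ E, m i = k * q := hkq.symm
      _ ≤ k * p j := Nat.mul_le_mul_left k h5
  -- direction 1: feasible → pointwise ≥ P
  have dir1 : ∀ (p : Fin n → ℕ),
      (∀ E : Finset (Fin n), E.card = s →
        ∑ i ∈ E, m i ≤ ∑ j ∈ Eᶜ, min (p j) (∑ i ∈ E, m i / k)) →
      ∀ j, P j ≤ p j := by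
    intro p hp j
    have key : k * P j ≤ k * p j := by
      rw [hPk j]
      by_cases hj : (j : ℕ) < s
      · simp only [hj, if_true]
        have hjA' : j ∈ A' := by simp [hA']; omega
        have hcard : (A'.erase j).card = s := by
          rw [Finset.card_erase_of_mem hjA', hA'card]; omega
        have hsum : ∑ i ∈ A'.erase j, m i = M' - m j := by
          have := Finset.add_sum_erase A' m hjA'
          omega
        have := extract p hp (A'.erase j) hcard j (Finset.notMem_erase j A')
        omega
      · simp only [hj, if_false]
        have hjA : j ∉ A := by simp [hA]; omega
        exact (hM ▸ extract p hp A hAcard j hjA)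
    exact Nat.le_of_mul_le_mul_left key hk0
  -- direction 2: pointwise ≥ P → feasible
  have dir2 : ∀ (p : Fin n → ℕ), (∀ j, P j ≤ p j) →
      ∀ E : Finset (Fin n), E.card = s →
        ∑ i ∈ E, m i ≤ ∑ j ∈ Eᶜ, min (p j) (∑ i ∈ E, m i / k) := by
    intro p hpP E hE
    set q : ℕ := ∑ i ∈ E, m i / k with hqdef
    have hkq : k * q = ∑ i ∈ E, m i := hq E
    have htop : ∑ i ∈ E, m i ≤ M := by
      have := topsum m hmono E
      rwa [hE] at this
    have hmin : ∀ j ∈ Eᶜ, min (p j) q = q := by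
      intro j hj
      have hjE : j ∉ E := Finset.mem_compl.mp hj
      have hqP : q ≤ P j := by
        have hkey : k * q ≤ k * P j := by
          rw [hkq, hPk j]
          by_cases hjs : (j : ℕ) < s
          · simp only [hjs, if_true]
            have hins : (insert j E).card = s + 1 := by
              rw [Finset.card_insert_of_notMem hjE, hE]
            have := topsum m hmono (insert j E)
            rw [hins, Finset.sum_insert hjE, ← hM'] at this
            omega
          · simp only [hjs, if_false]
            exact htop
        exact Nat.le_of_mul_le_mul_left hkey hk0
      have : q ≤ p j := le_trans hqP (hpP j)
      simp [min_eq_right this]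
    have heq : ∑ x ∈ Eᶜ, min (p x) q = k * q := by
      rw [Finset.sum_congr rfl hmin, Finset.sum_const, smul_eq_mul, hcompl E hE]
    have hfin : ∑ i ∈ E, m i = ∑ x ∈ Eᶜ, min (p x) q := by rw [heq, hkq]
    exact le_of_eq hfin
  -- sum of P
  have hsumA : ∑ j ∈ A, (M' - m j) = s * M' - M := by
    have h1 : ∑ j ∈ A, (M' - m j) + ∑ j ∈ A, m j = ∑ j ∈ A, M' := by
      rw [← Finset.sum_add_distrib]
      apply Finset.sum_congr rfl
      intro j hj
      have : m j ≤ M' := hmjM' j (by simp [hA] at hj; omega)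
      omega
    rw [Finset.sum_const, smul_eq_mul, ← hM] at h1
    rw [hAcard] at h1
    omega
  have hkP : k * ∑ j, P j = (n - 1) * M + s * m σ := by
    have hsplit : ∑ j, P j =
        ∑ j ∈ Finset.univ.filter (fun j : Fin n => (j : ℕ) < s), P j +
        ∑ j ∈ Finset.univ.filter (fun j : Fin n => ¬ (j : ℕ) < s), P j :=
      (Finset.sum_filter_add_sum_filter_not _ _ _).symm
    have hPA : ∀ j ∈ A, P j = (M' - m j) / k := by
      intro j hj
      simp only [hP]
      simp [hA] at hj
      simp [hj]
    have hnotcard : (Finset.univ.filter (fun j : Fin n => ¬ (j : ℕ) < s)).card = k := by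
      have := Finset.card_filter_add_card_filter_not
        (s := (Finset.univ : Finset (Fin n))) (p := fun j : Fin n => (j : ℕ) < s)
      rw [← hA] at this
      simp only [Finset.card_univ, Fintype.card_fin] at this
      omega
    have hsum1 : k * ∑ j ∈ A, P j = s * M' - M := by
      rw [Finset.mul_sum, ← hsumA]
      apply Finset.sum_congr rfl
      intro j hj
      rw [hPk j]
      simp [hA] at hj
      simp [hj]
    have hsum2 : k * ∑ j ∈ Finset.univ.filter (fun j : Fin n => ¬ (j : ℕ) < s), P j
        = k * M := by
      rw [Finset.mul_sum]
      have : ∀ j ∈ Finset.univ.filter (fun j : Fin n => ¬ (j : ℕ) < s), k * P j = M := by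
        intro j hj
        rw [hPk j]
        simp only [mem_filter, mem_univ, true_and] at hj
        rw [if_neg hj]
      rw [Finset.sum_congr rfl this, Finset.sum_const, smul_eq_mul, hnotcard]
    have hML : M ≤ s * M' := by
      have h1 : M ≤ M' := by omega
      calc M ≤ M' := h1
        _ ≤ s * M' := Nat.le_mul_of_pos_left M' (by omega)
    rw [hsplit, Nat.mul_add, ← hA, hsum1, hsum2]
    -- goal: s * M' - M + k * M = (n-1)*M + s * m σ
    have hn : n = s + k := by omega
    have : s * M' = s * M + s * m σ := by rw [hMM']; ring
    rw [this, hn]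
    have h2 : (s + k - 1) * M + M = s * M + k * M := by
      have h3 : s + k - 1 + 1 = s + k := by omega
      calc (s + k - 1) * M + M = (s + k - 1 + 1) * M := by ring
        _ = (s + k) * M := by rw [h3]
        _ = s * M + k * M := by ring
    omega
  have hdvdR : k ∣ (n - 1) * M + s * m σ :=
    Nat.dvd_add (Dvd.dvd.mul_left hdvdM _) (Dvd.dvd.mul_left (hdvd σ) _)
  have hsumP : ∑ j, P j = ((n - 1) * M + s * m σ) / k := by
    rw [← hkP, Nat.mul_div_cancel_left _ hk0]
  refine ⟨⟨⟨P, dir2 P (fun j => le_refl _), hsumP.symm⟩, ?_⟩, ?_⟩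
  · rintro R ⟨p, hp, rfl⟩
    rw [← hsumP]
    exact Finset.sum_le_sum fun j _ => dir1 p hp j
  · intro p hp hpsum
    have hle : ∀ j ∈ (Finset.univ : Finset (Fin n)), P j ≤ p j := fun j _ => dir1 p hp j
    have hsum : ∑ j, P j = ∑ j, p j := by rw [hsumP, hpsum]
    have heqall := (Finset.sum_eq_sum_iff_of_le hle).mp hsum
    funext j
    exact (heqall j (Finset.mem_univ j)).symm

/-- The smallest code redundancy of MUB codes when `1 ≤ k < n-1` and `k ∣ m i`:
the least value of `∑ j, p j` over feasible `p` equals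
`R_sma = ((n-1)·∑_{i=1}^{n-k} m i + (n-k)·m_{n-k+1}) / k`, attained by exactly
one feasible `p`. -/
theorem stmt6 (n k : ℕ) (hk1 : 1 ≤ k) (hk2 : k < n - 1)
    (m : Fin n → ℕ) (hmono : ∀ i j : Fin n, i ≤ j → m j ≤ m i)
    (hdvd : ∀ i, k ∣ m i) :
    let feasible : (Fin n → ℕ) → Prop := fun p =>
      ∀ E : Finset (Fin n), E.card = n - k →
        ∑ i ∈ E, m i ≤ ∑ j ∈ Eᶜ, min (p j) (∑ i ∈ E, m i / k)
    let Rsma : ℕ :=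
      ((n - 1) * ∑ i ∈ Finset.univ.filter (fun i : Fin n => (i : ℕ) < n - k), m i
        + (n - k) * m ⟨n - k, by omega⟩) / k
    let pstar : Fin n → ℕ := fun j =>
      if (j : ℕ) < n - k then
        ((∑ i ∈ Finset.univ.filter (fun i : Fin n => (i : ℕ) < n - k + 1), m i) - m j) / k
      else
        (∑ i ∈ Finset.univ.filter (fun i : Fin n => (i : ℕ) < n - k), m i) / k
    IsLeast {R : ℕ | ∃ p : Fin n → ℕ, feasible p ∧ R = ∑ j, p j} Rsma ∧
      ∀ p : Fin n → ℕ, feasible p → ∑ j, p j = Rsma → p = pstar := by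
  intro feasible Rsma pstar
  exact stmt6_aux n k hk1 hk2 m hmono hdvd (by omega)
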